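/- arXiv:1201.2123 — 2 statements merged into one kernel-verified Lean document; each statement's English description precedes it below -/
import Mathlib

section
/- For all integers 2 ≤ t ≤ n, the Turán number of K_{2,t} satisfies ex(n, K_{2,t}) ≤ (1/2)·√(t-1)·n^{3/2} + n/2, and consequently ex(n, K_{2,t}) ≤ √t · n^{3/2}. -/
set_option maxHeartbeats 1000000 in
/-- Kővári–Sós–Turán bound for `K_{2,t}`: any `n`-vertex graph containing no copy of
`K_{2,t}` has at most `(1/2)√(t-1) n^{3/2} + n/2 ≤ √t · n^{3/2}` edges. -/
theorem stmt1 (n t : ℕ) (ht : 2 ≤ t) (htn : t ≤ n)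
    (G : SimpleGraph (Fin n)) [DecidableRel G.Adj]
    (hfree : ¬ ∃ A B : Finset (Fin n), Disjoint A B ∧ A.card = 2 ∧ B.card = t ∧
      ∀ a ∈ A, ∀ b ∈ B, G.Adj a b) :
    (G.edgeFinset.card : ℝ) ≤
        (1 / 2) * Real.sqrt (t - 1) * (n : ℝ) ^ ((3 : ℝ) / 2) + n / 2 ∧
      (G.edgeFinset.card : ℝ) ≤ Real.sqrt t * (n : ℝ) ^ ((3 : ℝ) / 2) := by
  classical
  -- common neighbor bound
  have hcn : ∀ a b : Fin n, a ≠ b →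
      (G.neighborFinset a ∩ G.neighborFinset b).card ≤ t - 1 := by
    intro a b hab
    by_contra h
    push_neg at h
    have ht' : t ≤ (G.neighborFinset a ∩ G.neighborFinset b).card := by omega
    obtain ⟨B, hBsub, hBcard⟩ := Finset.exists_subset_card_eq ht'
    apply hfree
    refine ⟨{a, b}, B, ?_, ?_, hBcard, ?_⟩
    · rw [Finset.disjoint_left]
      intro x hx hxB
      have := hBsub hxB
      rw [Finset.mem_inter, SimpleGraph.mem_neighborFinset, SimpleGraph.mem_neighborFinset] at this
      rcases Finset.mem_insert.mp hx with rfl | hx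
      · exact G.loopless.irrefl x this.1
      · rw [Finset.mem_singleton] at hx; subst hx; exact G.loopless.irrefl x this.2
    · rw [Finset.card_insert_of_notMem (by simpa using hab), Finset.card_singleton]
    · intro a' ha' b' hb'
      have := hBsub hb'
      rw [Finset.mem_inter, SimpleGraph.mem_neighborFinset, SimpleGraph.mem_neighborFinset] at this
      rcases Finset.mem_insert.mp ha' with rfl | h'
      · exact this.1
      · rw [Finset.mem_singleton] at h'; subst h'; exact this.2
  -- double counting
  have key : ∑ v : Fin n, G.degree v * (G.degree v - 1) ≤ (t - 1) * (n * n - n) := by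
    have h1 : ∀ v : Fin n, G.degree v * (G.degree v - 1)
        = ∑ p ∈ (Finset.univ : Finset (Fin n)).offDiag,
            (if G.Adj v p.1 ∧ G.Adj v p.2 then 1 else 0) := by
      intro v
      rw [← Finset.card_filter]
      have : (Finset.univ.offDiag.filter fun p : Fin n × Fin n => G.Adj v p.1 ∧ G.Adj v p.2)
          = (G.neighborFinset v).offDiag := by
        ext p
        simp [Finset.mem_offDiag, SimpleGraph.mem_neighborFinset, and_comm, and_assoc]
        tauto
      rw [this, Finset.offDiag_card, SimpleGraph.card_neighborFinset_eq_degree,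
        Nat.mul_sub_one]
    calc ∑ v : Fin n, G.degree v * (G.degree v - 1)
        = ∑ p ∈ (Finset.univ : Finset (Fin n)).offDiag, ∑ v : Fin n,
            (if G.Adj v p.1 ∧ G.Adj v p.2 then 1 else 0) := by
          rw [Finset.sum_comm]; exact Finset.sum_congr rfl fun v _ => h1 v
      _ = ∑ p ∈ (Finset.univ : Finset (Fin n)).offDiag,
            (G.neighborFinset p.1 ∩ G.neighborFinset p.2).card := by
          refine Finset.sum_congr rfl fun p _ => ?_
          rw [← Finset.card_filter]
          congr 1
          ext v
          simp [SimpleGraph.mem_neighborFinset, SimpleGraph.adj_comm]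
      _ ≤ ∑ p ∈ (Finset.univ : Finset (Fin n)).offDiag, (t - 1) := by
          refine Finset.sum_le_sum fun p hp => ?_
          exact hcn p.1 p.2 (Finset.mem_offDiag.mp hp).2.2
      _ = (t - 1) * (n * n - n) := by
          rw [Finset.sum_const, smul_eq_mul, Finset.offDiag_card]
          simp [mul_comm]
  -- move to the reals
  set e : ℝ := (G.edgeFinset.card : ℝ) with he_def
  have he : 0 ≤ e := by positivity
  have hn1 : (1:ℝ) ≤ n := by exact_mod_cast le_trans (by omega) htn
  have hn0 : (0:ℝ) ≤ n := by linarith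
  have hsumdeg : ∑ v : Fin n, (G.degree v : ℝ) = 2 * e := by
    rw [he_def]
    exact_mod_cast congrArg (Nat.cast : ℕ → ℝ) G.sum_degrees_eq_twice_card_edges
  have hcastterm : ∀ v : Fin n, ((G.degree v * (G.degree v - 1) : ℕ) : ℝ)
      = (G.degree v : ℝ) ^ 2 - (G.degree v : ℝ) := by
    intro v
    rcases Nat.eq_zero_or_pos (G.degree v) with h | h
    · simp [h]
    · have : ((G.degree v - 1 : ℕ) : ℝ) = (G.degree v : ℝ) - 1 := by
        push_cast [h]; ring
      push_cast [this]; ring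
  have keyR : ∑ v : Fin n, (G.degree v : ℝ) ^ 2 - 2 * e ≤ ((t:ℝ) - 1) * ((n:ℝ)^2 - n) := by
    have h1 : ((∑ v : Fin n, G.degree v * (G.degree v - 1) : ℕ) : ℝ)
        ≤ (((t - 1) * (n * n - n) : ℕ) : ℝ) := by exact_mod_cast key
    rw [Nat.cast_sum] at h1
    simp only [hcastterm] at h1
    rw [Finset.sum_sub_distrib, hsumdeg] at h1
    have h2 : (((t - 1) * (n * n - n) : ℕ) : ℝ) = ((t:ℝ) - 1) * ((n:ℝ)^2 - n) := by
      have ht1 : 1 ≤ t := by omega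
      have hnn : n ≤ n * n := Nat.le_mul_of_pos_left n (by omega)
      push_cast [Nat.cast_sub ht1, Nat.cast_sub hnn]
      ring
    linarith [h1, h2.le, h2.ge]
  have hCS : (2 * e) ^ 2 ≤ (n : ℝ) * ∑ v : Fin n, (G.degree v : ℝ) ^ 2 := by
    have := sq_sum_le_card_mul_sum_sq (s := (Finset.univ : Finset (Fin n)))
      (f := fun v => (G.degree v : ℝ))
    simpa [hsumdeg, Finset.card_univ] using this
  have hmain : 4 * e ^ 2 ≤ ((t:ℝ) - 1) * (n:ℝ)^3 + 2 * e * n := by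
    have h3 : (0:ℝ) ≤ ((t:ℝ) - 1) * (n:ℝ)^2 := by
      have : (2:ℝ) ≤ t := by exact_mod_cast ht
      nlinarith
    nlinarith [hCS, mul_le_mul_of_nonneg_left keyR hn0, h3, hn0]
  -- the quantities √(t-1), n^{3/2}
  set s : ℝ := Real.sqrt ((t:ℝ) - 1) with hs_def
  set m : ℝ := Real.sqrt n * n with hm_def
  have ht1R : (1:ℝ) ≤ (t:ℝ) - 1 := by
    have : (2:ℝ) ≤ t := by exact_mod_cast ht
    linarith
  have hs0 : 0 ≤ s := Real.sqrt_nonneg _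
  have hs2 : s ^ 2 = (t:ℝ) - 1 := Real.sq_sqrt (by linarith)
  have hm0 : 0 ≤ m := mul_nonneg (Real.sqrt_nonneg _) hn0
  have hm2 : m ^ 2 = (n:ℝ) ^ 3 := by
    rw [hm_def, mul_pow, Real.sq_sqrt hn0]; ring
  have hnm : (n:ℝ) ≤ m := by
    have : (1:ℝ) ≤ Real.sqrt n := by
      rw [show (1:ℝ) = Real.sqrt 1 by simp]
      exact Real.sqrt_le_sqrt hn1
    nlinarith
  have hrpow : (n : ℝ) ^ ((3 : ℝ) / 2) = m := by
    rw [show ((3:ℝ)/2) = (3:ℕ) * ((1:ℝ)/2) by norm_num, Real.rpow_mul hn0,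
      Real.rpow_natCast, ← Real.sqrt_eq_rpow, pow_succ,
      Real.sqrt_mul (by positivity), Real.sqrt_sq hn0, hm_def]
    ring
  have hfirst : e ≤ (1/2) * s * m + (n:ℝ)/2 := by
    by_contra hc
    push_neg at hc
    have hX : 0 < 2*e - (n:ℝ) - s*m := by linarith
    have hY : 0 < 2*e + s*m := by nlinarith [mul_nonneg hs0 hm0]
    have hfac : 4*e^2 - 2*e*n - s^2*m^2
        = (2*e - n - s*m)*(2*e + s*m) + (n:ℝ)*(s*m) := by ring
    have h1 : 0 < (2*e - n - s*m)*(2*e + s*m) := mul_pos hX hY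
    have h2 : 0 ≤ (n:ℝ)*(s*m) := mul_nonneg hn0 (mul_nonneg hs0 hm0)
    have h3 : s^2*m^2 = ((t:ℝ) - 1) * (n:ℝ)^3 := by rw [hs2, hm2]
    nlinarith [hmain]
  refine ⟨by rw [hrpow]; exact hfirst, ?_⟩
  rw [hrpow]
  set u : ℝ := Real.sqrt t with hu_def
  have hu1 : (1:ℝ) ≤ u := by
    rw [hu_def, show (1:ℝ) = Real.sqrt 1 by simp]
    exact Real.sqrt_le_sqrt (by linarith)
  have hsu : s ≤ u := Real.sqrt_le_sqrt (by linarith)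
  calc e ≤ (1/2) * s * m + (n:ℝ)/2 := hfirst
    _ ≤ u * m := by nlinarith [hnm, hm0, hsu, hu1, hs0]
end

section
/- Let p be an odd prime and consider the graph G⁺(p², p): the vertex set is (F_{p²}/H) × F_{p²}* where F_{p²} = Z_p[x]/(f(x)) for an irreducible quadratic f, H = {0, x, 2x, ..., (p−1)x} is the additive subgroup of order p generated by x, and (ā,u) is adjacent to (b̄,v) iff uv ∈ ā+b̄. Then the independence number of G⁺(p², p) is at least ⌊p²/2⌋; specifically, taking g a generator of F_{p²}*, the set {(0̄, g^{2k}) : 0 ≤ k < p²/2} is independent. -/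
/-- The adjacency relation of the graph `G⁺`. -/
def adjPlus {F : Type} [Field F] (H : AddSubgroup F)
    (v w : (F ⧸ H) × Fˣ) : Prop :=
  (QuotientAddGroup.mk ((v.2 : F) * (w.2 : F)) : F ⧸ H) = v.1 + w.1

lemma charP_of_card {p : ℕ} (hp : p.Prime) (F : Type) [Field F] [Fintype F]
    (hcard : Fintype.card F = p ^ 2) : CharP F p := by
  obtain ⟨q, hq⟩ := CharP.exists F
  obtain ⟨n, hqprime, hcard'⟩ := @FiniteField.card F _ _ q hq
  have hqp : q = p := by
    have h1 : q ∣ p ^ 2 := hcard ▸ hcard' ▸ dvd_pow_self q n.pos.ne'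
    exact (Nat.prime_dvd_prime_iff_eq hqprime hp).mp (hqprime.dvd_of_dvd_pow h1)
  exact hqp ▸ hq

lemma key (p : ℕ) (hp : p.Prime) (hodd : p ≠ 2)
    (F : Type) [Field F] [Fintype F] (hcard : Fintype.card F = p ^ 2)
    (g : Fˣ) (hg : ∀ u : Fˣ, u ∈ Subgroup.zpowers g) (j k : ℕ) :
    ¬ adjPlus (AddSubgroup.zmultiples (g : F))
      ((0 : F ⧸ AddSubgroup.zmultiples (g : F)), g ^ (2 * j))
      ((0 : F ⧸ AddSubgroup.zmultiples (g : F)), g ^ (2 * k)) := by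
  haveI := Classical.decEq F
  haveI : CharP F p := charP_of_card hp F hcard
  intro hadj
  unfold adjPlus at hadj
  simp only [add_zero] at hadj
  rw [QuotientAddGroup.eq_zero_iff] at hadj
  obtain ⟨n, hn⟩ := AddSubgroup.mem_zmultiples_iff.mp hadj
  rw [zsmul_eq_mul] at hn
  -- hn : (n : F) * g = ↑(g ^ (2*j)) * ↑(g ^ (2*k))
  set c : F := (n : F) with hc
  have hcg : (g : F) ^ (2 * j + 2 * k) = c * g := by
    rw [pow_add]; rw [← Units.val_pow_eq_pow_val, ← Units.val_pow_eq_pow_val]; exact hn.symm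
  have hcne : c ≠ 0 := by
    intro h0
    rw [h0, zero_mul] at hcg
    exact (pow_ne_zero _ g.ne_zero) hcg
  -- Fermat: c ^ p = c
  have hcp : c ^ p = c := by
    have hdvd : ((p : ℤ)) ∣ n ^ p - n := by
      have : ((n ^ p - n : ℤ) : ZMod p) = 0 := by
        push_cast
        haveI : Fact p.Prime := ⟨hp⟩
        rw [ZMod.pow_card]; ring
      exact (ZMod.intCast_zmod_eq_zero_iff_dvd _ p).mp this
    have : ((n ^ p - n : ℤ) : F) = 0 := (CharP.intCast_eq_zero_iff F p _).mpr hdvd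
    push_cast at this
    linear_combination this
  have hc1 : c ^ (p - 1) = 1 := by
    have h2 : c ^ (p - 1) * c = c := by
      rw [← pow_succ, Nat.sub_add_cancel hp.one_le, hcp]
    exact mul_right_cancel₀ hcne (by rw [h2, one_mul])
  -- lift c to a unit
  set u : Fˣ := Units.mk0 c hcne with hu
  have hug : g ^ (2 * j + 2 * k) = u * g := Units.ext (by
    rw [Units.val_mul, Units.val_pow_eq_pow_val]; exact hcg)
  have hu1 : u ^ (p - 1) = 1 := Units.ext (by
    rw [Units.val_pow_eq_pow_val]; exact hc1)
  have hpow : g ^ ((2 * j + 2 * k) * (p - 1)) = g ^ (p - 1) := by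
    rw [pow_mul, hug, mul_pow, hu1, one_mul]
  have horder : orderOf g = p ^ 2 - 1 := by
    rw [orderOf_eq_card_of_forall_mem_zpowers hg, Nat.card_eq_fintype_card, Fintype.card_units, hcard]
  have hmod : (2 * j + 2 * k) * (p - 1) ≡ (p - 1) [MOD p ^ 2 - 1] := by
    rw [← horder]
    exact (pow_eq_pow_iff_modEq.mp hpow)
  have hdvd : ((p : ℤ) ^ 2 - 1) ∣ ((p : ℤ) - 1) - (2 * j + 2 * k) * ((p : ℤ) - 1) := by
    have := hmod.dvd
    have hple : 1 ≤ p := hp.one_le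
    have hp2 : 1 ≤ p ^ 2 := Nat.one_le_pow _ _ hp.pos
    push_cast [Nat.cast_sub hple, Nat.cast_sub hp2] at this
    convert this using 2
  have hfac : ((p : ℤ) - 1) * ((p : ℤ) + 1) ∣ ((p:ℤ) - 1) * (1 - (2 * j + 2 * k)) := by
    have : ((p : ℤ) ^ 2 - 1) = ((p:ℤ) - 1) * ((p:ℤ) + 1) := by ring
    rw [← this]
    convert hdvd using 1; ring
  have hpne : ((p : ℤ) - 1) ≠ 0 := by
    have : (2 : ℤ) ≤ p := by exact_mod_cast hp.two_le
    omega
  have hdvd2 : ((p : ℤ) + 1) ∣ (1 - (2 * (j + k) : ℤ)) := by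
    have := (mul_dvd_mul_iff_left hpne).mp hfac
    convert this using 1; exact rfl; ring
  have heven : (2 : ℤ) ∣ (p : ℤ) + 1 := by
    obtain ⟨m, hm⟩ := hp.odd_of_ne_two hodd
    exact ⟨m + 1, by push_cast [hm]; ring⟩
  obtain ⟨t, ht⟩ := heven.trans hdvd2
  omega

/-- For an odd prime `p` and `F` of order `p²`, taking `H` the additive subgroup of
order `p` generated by a generator `g` of `F*`, the set
`{(0̄, g^{2k}) : 0 ≤ k < p²/2}` is independent in `G⁺(p²,p)`; hence the independence
number of `G⁺(p²,p)` is at least `⌊p²/2⌋`. -/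
theorem stmt13 (p : ℕ) (hp : p.Prime) (hodd : p ≠ 2)
    (F : Type) [Field F] [Fintype F] (hcard : Fintype.card F = p ^ 2)
    (g : Fˣ) (hg : ∀ u : Fˣ, u ∈ Subgroup.zpowers g) :
    let H := AddSubgroup.zmultiples (g : F)
    (∀ j k : ℕ, j < p ^ 2 / 2 → k < p ^ 2 / 2 →
      ¬ adjPlus H ((0 : F ⧸ H), g ^ (2 * j)) ((0 : F ⧸ H), g ^ (2 * k))) ∧
    ∃ S : Finset ((F ⧸ H) × Fˣ), p ^ 2 / 2 ≤ S.card ∧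
      ∀ v ∈ S, ∀ w ∈ S, ¬ adjPlus H v w := by
  intro H
  classical
  refine ⟨fun j k _ _ => key p hp hodd F hcard g hg j k, ?_⟩
  
  have horder : orderOf g = p ^ 2 - 1 := by
    rw [orderOf_eq_card_of_forall_mem_zpowers hg, Nat.card_eq_fintype_card,
      Fintype.card_units, hcard]
  refine ⟨(Finset.range (p ^ 2 / 2)).image (fun k => ((0 : F ⧸ H), g ^ (2 * k))), ?_, ?_⟩
  · rw [Finset.card_image_of_injOn, Finset.card_range]
    intro a ha b hb hab
    simp only [Finset.coe_range, Set.mem_Iio] at ha hb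
    have := congrArg Prod.snd hab
    simp only at this
    have hinj := pow_injOn_Iio_orderOf (x := g)
    have h2 : 2 ≤ p ^ 2 := by nlinarith [hp.two_le]
    have hlt : ∀ c : ℕ, c < p ^ 2 / 2 → 2 * c < orderOf g := by
      intro c hc; rw [horder]; omega
    have := hinj (Set.mem_Iio.mpr (hlt a ha)) (Set.mem_Iio.mpr (hlt b hb)) this
    omega
  · intro v hv w hw
    simp only [Finset.mem_image, Finset.mem_range] at hv hw
    obtain ⟨a, ha, rfl⟩ := hv
    obtain ⟨b, hb, rfl⟩ := hw
    exact key p hp hodd F hcard g hg a b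
end
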